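/- Let 𝒜 : [1,∞) → [0,∞) be a strictly increasing continuous bijection with 𝒜(1) = 0, with inverse 𝒜⁻¹ : [0,∞) → [1,∞), and define P(t) = t² for 0 ≤ t < 1 and P(t) = t²/𝒜⁻¹(log(t²)) for t ≥ 1. Then for every real symmetric positive definite 2×2 matrix σ and every ξ ∈ ℝ²: P(‖ξ‖) + P(‖σξ‖) ≤ 2·exp(𝒜(tr σ + tr σ⁻¹)) + 2·⟨ξ, σ ξ⟩. -/

import Mathlib

open scoped RealInnerProductSpace

lemma scalar_M_ge_one (a b c : ℝ) (hapos : 0 < a) (hcpos : 0 < c)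
    (hdpos : 0 < a * c - b ^ 2) :
    1 ≤ (a + c) + (a + c) / (a * c - b ^ 2) := by
  have key : 4 * (a * c - b ^ 2) ≤ (a + c) * ((a * c - b ^ 2) + 1) := by
    nlinarith [sq_nonneg (a - c), sq_nonneg b, sq_nonneg (a * c - b ^ 2 - 1),
      sq_nonneg (a + c - 2), mul_pos hapos hcpos, sq_nonneg (a + c - a * c + b ^ 2 - 1)]
  have h4 : (a + c) + (a + c) / (a * c - b ^ 2) - 4
      = ((a + c) * ((a * c - b ^ 2) + 1) - 4 * (a * c - b ^ 2)) / (a * c - b ^ 2) := by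
    field_simp
  have : 0 ≤ (a + c) + (a + c) / (a * c - b ^ 2) - 4 := by
    rw [h4]; exact div_nonneg (by linarith) hdpos.le
  linarith

lemma scalar_q_nonneg (a b c x y : ℝ) (hapos : 0 < a)
    (hdpos : 0 < a * c - b ^ 2) :
    0 ≤ a * x ^ 2 + 2 * b * x * y + c * y ^ 2 := by
  nlinarith [sq_nonneg (a * x + b * y), mul_nonneg hdpos.le (sq_nonneg y)]

lemma scalar_bound1 (a b c x y : ℝ) (hapos : 0 < a) (hcpos : 0 < c)
    (hdpos : 0 < a * c - b ^ 2) :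
    x ^ 2 + y ^ 2 ≤ ((a + c) + (a + c) / (a * c - b ^ 2)) * (a * x ^ 2 + 2 * b * x * y + c * y ^ 2) := by
  have hqnn := scalar_q_nonneg a b c x y hapos hdpos
  have h2 : x ^ 2 + y ^ 2 ≤ (a + c) / (a * c - b ^ 2) * (a * x ^ 2 + 2 * b * x * y + c * y ^ 2) := by
    rw [div_mul_eq_mul_div, le_div_iff₀ hdpos]
    nlinarith [sq_nonneg (a * x + b * y), sq_nonneg (b * x + c * y)]
  nlinarith [mul_nonneg (by linarith : (0:ℝ) ≤ a + c) hqnn]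

lemma scalar_bound2 (a b c x y : ℝ) (hapos : 0 < a) (hcpos : 0 < c)
    (hdpos : 0 < a * c - b ^ 2) :
    (a * x + b * y) ^ 2 + (b * x + c * y) ^ 2
      ≤ ((a + c) + (a + c) / (a * c - b ^ 2)) * (a * x ^ 2 + 2 * b * x * y + c * y ^ 2) := by
  have hqnn := scalar_q_nonneg a b c x y hapos hdpos
  have h1 : (a * x + b * y) ^ 2 + (b * x + c * y) ^ 2
      ≤ (a + c) * (a * x ^ 2 + 2 * b * x * y + c * y ^ 2) := by
    nlinarith [mul_nonneg hdpos.le (by positivity : (0:ℝ) ≤ x ^ 2 + y ^ 2)]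
  have h2 : 0 ≤ (a + c) / (a * c - b ^ 2) * (a * x ^ 2 + 2 * b * x * y + c * y ^ 2) := by
    have : 0 ≤ (a + c) / (a * c - b ^ 2) := by positivity
    exact mul_nonneg this hqnn
  nlinarith

/-- Key scalar estimate: if `t² ≤ M·s` with `M ≥ 1`, `s ≥ 0`, then `P t ≤ exp (𝒜 M) + s`. -/
lemma pointwise_gauge_key
    (𝒜 B : ℝ → ℝ)
    (h𝒜mono : StrictMonoOn 𝒜 (Set.Ici 1))
    (h𝒜bij : Set.BijOn 𝒜 (Set.Ici 1) (Set.Ici 0))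
    (h𝒜1 : 𝒜 1 = 0)
    (hBinv : Set.InvOn B 𝒜 (Set.Ici 1) (Set.Ici 0))
    (P : ℝ → ℝ)
    (hPlt : ∀ t : ℝ, 0 ≤ t → t < 1 → P t = t ^ 2)
    (hPge : ∀ t : ℝ, 1 ≤ t → P t = t ^ 2 / B (Real.log (t ^ 2)))
    (M s t : ℝ) (hM : 1 ≤ M) (hs : 0 ≤ s) (ht : 0 ≤ t) (h : t ^ 2 ≤ M * s) :
    P t ≤ Real.exp (𝒜 M) + s := by
  have hB : ∀ y ∈ Set.Ici (0:ℝ), B y ∈ Set.Ici (1:ℝ) ∧ 𝒜 (B y) = y := by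
    intro y hy
    obtain ⟨x, hx, rfl⟩ := h𝒜bij.surjOn hy
    have hbx : B (𝒜 x) = x := hBinv.1 hx
    exact ⟨by rw [hbx]; exact hx, by rw [hbx]⟩
  have h𝒜M : 0 ≤ 𝒜 M := by
    rcases eq_or_lt_of_le hM with h1 | h1
    · rw [← h1, h𝒜1]
    · rw [← h𝒜1]; exact (h𝒜mono Set.self_mem_Ici (le_of_lt h1) h1).le
  have hE1 : (1:ℝ) ≤ Real.exp (𝒜 M) := by
    rw [← Real.exp_zero]; exact Real.exp_le_exp.mpr h𝒜M
  rcases lt_or_ge t 1 with ht1 | ht1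
  · rw [hPlt t ht ht1]
    have : t ^ 2 ≤ 1 := by nlinarith
    nlinarith
  · rw [hPge t ht1]
    have ht2 : (1:ℝ) ≤ t ^ 2 := by nlinarith
    have hlog : Real.log (t ^ 2) ∈ Set.Ici (0:ℝ) := Real.log_nonneg ht2
    obtain ⟨hB1, hAB⟩ := hB _ hlog
    rcases le_or_gt (t ^ 2) (Real.exp (𝒜 M)) with hc | hc
    · have : t ^ 2 / B (Real.log (t ^ 2)) ≤ t ^ 2 :=
        div_le_self (by positivity) hB1
      nlinarith
    · have hlogM : 𝒜 M < Real.log (t ^ 2) := by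
        have := Real.log_lt_log (Real.exp_pos _) hc
        rwa [Real.log_exp] at this
      have hBM : M ≤ B (Real.log (t ^ 2)) := by
        by_contra hcon
        push_neg at hcon
        have := h𝒜mono hB1 hM hcon
        rw [hAB] at this
        linarith
      have hMpos : (0:ℝ) < M := lt_of_lt_of_le one_pos hM
      have h1 : t ^ 2 / B (Real.log (t ^ 2)) ≤ t ^ 2 / M :=
        div_le_div_of_nonneg_left (by positivity) hMpos hBM
      have h2 : t ^ 2 / M ≤ s := by
        rw [div_le_iff₀ hMpos]; linarith
      nlinarith

/-- Let `𝒜 : [1,∞) → [0,∞)` be a strictly increasing continuous bijection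
with `𝒜(1) = 0`, with inverse `B = 𝒜⁻¹ : [0,∞) → [1,∞)`, and define `P(t) = t²` for
`0 ≤ t < 1` and `P(t) = t²/𝒜⁻¹(log(t²))` for `t ≥ 1`. Then for every real symmetric positive
definite `2×2` matrix `σ` and every `ξ ∈ ℝ²`:
`P(‖ξ‖) + P(‖σξ‖) ≤ 2·exp(𝒜(tr σ + tr σ⁻¹)) + 2·⟨ξ, σ ξ⟩`. -/
theorem pointwise_gauge_estimate
    (𝒜 B : ℝ → ℝ)
    (h𝒜mono : StrictMonoOn 𝒜 (Set.Ici 1))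
    (h𝒜cont : ContinuousOn 𝒜 (Set.Ici 1))
    (h𝒜bij : Set.BijOn 𝒜 (Set.Ici 1) (Set.Ici 0))
    (h𝒜1 : 𝒜 1 = 0)
    (hBinv : Set.InvOn B 𝒜 (Set.Ici 1) (Set.Ici 0))
    (P : ℝ → ℝ)
    (hPlt : ∀ t : ℝ, 0 ≤ t → t < 1 → P t = t ^ 2)
    (hPge : ∀ t : ℝ, 1 ≤ t → P t = t ^ 2 / B (Real.log (t ^ 2)))
    (σ : Matrix (Fin 2) (Fin 2) ℝ) (hsym : σ.IsSymm) (hpd : σ.PosDef)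
    (ξ : EuclideanSpace ℝ (Fin 2)) :
    P ‖ξ‖ + P ‖Matrix.toEuclideanLin σ ξ‖
      ≤ 2 * Real.exp (𝒜 (σ.trace + σ⁻¹.trace))
        + 2 * ⟪ξ, Matrix.toEuclideanLin σ ξ⟫ := by
  have hba : σ 1 0 = σ 0 1 := by
    conv_lhs => rw [← hsym]
    rw [Matrix.transpose_apply]
  have hdiag : ∀ i : Fin 2, 0 < σ i i := by
    intro i
    exact hpd.diag_pos
  have hapos : 0 < σ 0 0 := hdiag 0
  have hcpos : 0 < σ 1 1 := hdiag 1
  have hdet : σ.det = σ 0 0 * σ 1 1 - σ 0 1 ^ 2 := by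
    rw [Matrix.det_fin_two, hba]; ring
  have hdpos : 0 < σ 0 0 * σ 1 1 - σ 0 1 ^ 2 := hdet ▸ hpd.det_pos
  have htr : σ.trace = σ 0 0 + σ 1 1 := by rw [Matrix.trace_fin_two]
  have htrinv : σ⁻¹.trace = (σ 0 0 + σ 1 1) / (σ 0 0 * σ 1 1 - σ 0 1 ^ 2) := by
    have hd : σ.det ≠ 0 := ne_of_gt hpd.det_pos
    rw [Matrix.inv_def, Matrix.trace_smul, Matrix.adjugate_fin_two, hdet]
    rw [hdet] at hd
    simp [Matrix.trace_fin_two]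
    field_simp
    ring
  have hM : σ.trace + σ⁻¹.trace
      = (σ 0 0 + σ 1 1) + (σ 0 0 + σ 1 1) / (σ 0 0 * σ 1 1 - σ 0 1 ^ 2) := by
    rw [htr, htrinv]
  have hq : ⟪ξ, Matrix.toEuclideanLin σ ξ⟫
      = σ 0 0 * ξ 0 ^ 2 + 2 * σ 0 1 * ξ 0 * ξ 1 + σ 1 1 * ξ 1 ^ 2 := by
    simp [PiLp.inner_apply, Matrix.toEuclideanLin_apply, Matrix.mulVec, dotProduct,
      Fin.sum_univ_two, hba]
    ring
  have hnxi : ‖ξ‖ ^ 2 = ξ 0 ^ 2 + ξ 1 ^ 2 := by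
    rw [EuclideanSpace.norm_sq_eq]
    simp [Fin.sum_univ_two]
  have hnsxi : ‖Matrix.toEuclideanLin σ ξ‖ ^ 2
      = (σ 0 0 * ξ 0 + σ 0 1 * ξ 1) ^ 2 + (σ 0 1 * ξ 0 + σ 1 1 * ξ 1) ^ 2 := by
    rw [EuclideanSpace.norm_sq_eq]
    simp [Matrix.toEuclideanLin_apply, Matrix.mulVec, dotProduct,
      Fin.sum_univ_two, hba]
  have hM1 := scalar_M_ge_one (σ 0 0) (σ 0 1) (σ 1 1) hapos hcpos hdpos
  have hqnn := scalar_q_nonneg (σ 0 0) (σ 0 1) (σ 1 1) (ξ 0) (ξ 1) hapos hdpos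
  have hb1 := scalar_bound1 (σ 0 0) (σ 0 1) (σ 1 1) (ξ 0) (ξ 1) hapos hcpos hdpos
  have hb2 := scalar_bound2 (σ 0 0) (σ 0 1) (σ 1 1) (ξ 0) (ξ 1) hapos hcpos hdpos
  rw [hM, hq]
  have k1 := pointwise_gauge_key 𝒜 B h𝒜mono h𝒜bij h𝒜1 hBinv P hPlt hPge
    ((σ 0 0 + σ 1 1) + (σ 0 0 + σ 1 1) / (σ 0 0 * σ 1 1 - σ 0 1 ^ 2))
    (σ 0 0 * ξ 0 ^ 2 + 2 * σ 0 1 * ξ 0 * ξ 1 + σ 1 1 * ξ 1 ^ 2)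
    ‖ξ‖ hM1 hqnn (norm_nonneg _) (by rw [hnxi]; exact hb1)
  have k2 := pointwise_gauge_key 𝒜 B h𝒜mono h𝒜bij h𝒜1 hBinv P hPlt hPge
    ((σ 0 0 + σ 1 1) + (σ 0 0 + σ 1 1) / (σ 0 0 * σ 1 1 - σ 0 1 ^ 2))
    (σ 0 0 * ξ 0 ^ 2 + 2 * σ 0 1 * ξ 0 * ξ 1 + σ 1 1 * ξ 1 ^ 2)
    ‖Matrix.toEuclideanLin σ ξ‖ hM1 hqnn (norm_nonneg _) (by rw [hnsxi]; exact hb2)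
  linarith
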